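/- For the 3×3 matrix M with columns (1,−1,0), (−5,1,3), (0,−1,1), the bounded M-subgraphs of ℕ³ are exactly the four slices {(a,b,c) ∈ ℕ³ : a+b+c = n} for n = 0,1,2,3, and the set {(a,b,c) ∈ ℕ³ : a+b+c ≥ 4} is a single unbounded M-subgraph. Consequently the polynomials 1, x+y+z, (x+y+z)², (x+y+z)³ form a basis of the polynomial solutions of I(M). -/

import Mathlib

open MvPolynomial

namespace Stmt11

noncomputable def s : MvPolynomial (Fin 3) ℂ := X 0 + X 1 + X 2

def w₁ : Fin 3 → ℤ := ![1, -1, 0]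
def w₂ : Fin 3 → ℤ := ![-5, 1, 3]
def w₃ : Fin 3 → ℤ := ![0, -1, 1]

def adj : (Fin 3 → ℕ) → (Fin 3 → ℕ) → Prop := fun u v =>
  ∃ w ∈ ({w₁, w₂, w₃} : Set (Fin 3 → ℤ)),
    (∀ i, (v i : ℤ) = (u i : ℤ) + w i) ∨ (∀ i, (u i : ℤ) = (v i : ℤ) + w i)

lemma adj_symm : Symmetric adj := by
  rintro u v ⟨w, hw, h⟩
  exact ⟨w, hw, h.symm⟩

def Rel (u v : Fin 3 → ℕ) : Prop :=
  (u 0 + u 1 + u 2 = v 0 + v 1 + v 2 ∧ u 0 + u 1 + u 2 ≤ 3) ∨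
    (4 ≤ u 0 + u 1 + u 2 ∧ 4 ≤ v 0 + v 1 + v 2)

lemma adj_rel {u v : Fin 3 → ℕ} (h : adj u v) : Rel u v := by
  obtain ⟨w, hw, h⟩ := h
  simp only [Set.mem_insert_iff, Set.mem_singleton_iff] at hw
  unfold Rel
  rcases hw with rfl | rfl | rfl <;> rcases h with h | h <;>
    · have e0 := h 0; have e1 := h 1; have e2 := h 2
      simp [w₁, w₂, w₃] at e0 e1 e2
      omega

lemma rel_trans {u v x : Fin 3 → ℕ} (h : Rel u v) (h' : Rel v x) : Rel u x := by
  unfold Rel at *; omega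

lemma rtg_rel {u v : Fin 3 → ℕ} (h : Relation.ReflTransGen adj u v) : Rel u v := by
  induction h with
  | refl => unfold Rel; omega
  | tail _ hab ih => exact rel_trans ih (adj_rel hab)

lemma reach (u : Fin 3 → ℕ) :
    Relation.ReflTransGen adj u ![u 0 + u 1 + u 2, 0, 0] := by
  generalize hm : u 1 + 2 * u 2 = m
  induction m using Nat.strong_induction_on generalizing u with
  | _ m ih =>
  rcases Nat.eq_zero_or_pos (u 1) with h1 | h1
  · rcases Nat.eq_zero_or_pos (u 2) with h2 | h2
    · have : u = ![u 0 + u 1 + u 2, 0, 0] := by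
        funext i; fin_cases i <;> simp <;> omega
      rw [← this]
    · -- u1 = 0, u2 > 0 : step by -w₃ to v
      set v : Fin 3 → ℕ := ![u 0, u 1 + 1, u 2 - 1] with hv
      have hadj : adj u v := by
        refine ⟨w₃, by simp, Or.inr fun i => ?_⟩
        fin_cases i <;> simp [w₃, hv] <;> omega
      have hsum : v 0 + v 1 + v 2 = u 0 + u 1 + u 2 := by simp [hv]; omega
      have := ih (v 1 + 2 * v 2) (by simp [hv]; omega) v rfl
      rw [hsum] at this
      exact Relation.ReflTransGen.head hadj this
  · -- u1 > 0 : step by w₁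
    set v : Fin 3 → ℕ := ![u 0 + 1, u 1 - 1, u 2] with hv
    have hadj : adj u v := by
      refine ⟨w₁, by simp, Or.inl fun i => ?_⟩
      fin_cases i <;> simp [w₁, hv] <;> omega
    have hsum : v 0 + v 1 + v 2 = u 0 + u 1 + u 2 := by simp [hv]; omega
    have := ih (v 1 + 2 * v 2) (by simp [hv]; omega) v rfl
    rw [hsum] at this
    exact Relation.ReflTransGen.head hadj this

lemma e_step {n : ℕ} (h : 4 ≤ n) :
    Relation.ReflTransGen adj ![n, 0, 0] ![n + 1, 0, 0] := by
  have h1 : Relation.ReflTransGen adj (![n - 4, 1, 3] : Fin 3 → ℕ) ![n, 0, 0] := by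
    have := reach ![n - 4, 1, 3]
    simpa [show n - 4 + 1 + 3 = n by omega] using this
  have h2 : adj ![n - 4, 1, 3] ![n + 1, 0, 0] := by
    refine ⟨w₂, by simp, Or.inr fun i => ?_⟩
    fin_cases i <;> simp [w₂] <;> omega
  exact ((@Relation.ReflTransGen.stdSymm _ _ ⟨fun a b h => adj_symm h⟩).symm _ _ h1).tail h2

lemma e_reach {m n : ℕ} (hm : 4 ≤ m) (h : m ≤ n) :
    Relation.ReflTransGen adj ![m, 0, 0] ![n, 0, 0] := by
  induction n, h using Nat.le_induction with
  | base => exact Relation.ReflTransGen.refl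
  | succ n hn ih => exact ih.trans (e_step (by omega))

lemma part1 (u v : Fin 3 → ℕ) :
    Relation.ReflTransGen adj u v ↔
      ((∑ i, u i = ∑ i, v i ∧ ∑ i, u i ≤ 3) ∨ (4 ≤ ∑ i, u i ∧ 4 ≤ ∑ i, v i)) := by
  simp only [Fin.sum_univ_three]
  constructor
  · exact rtg_rel
  · intro h
    have hu := reach u
    have hv := ((@Relation.ReflTransGen.stdSymm _ _ ⟨fun a b h => adj_symm h⟩).symm _ _ (reach v))
    rcases h with ⟨hs, _⟩ | ⟨h4u, h4v⟩
    · rw [hs] at hu; exact hu.trans hv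
    · rcases le_total (u 0 + u 1 + u 2) (v 0 + v 1 + v 2) with hle | hle
      · exact hu.trans ((e_reach h4u hle).trans hv)
      · exact hu.trans ((((@Relation.ReflTransGen.stdSymm _ _ ⟨fun a b h => adj_symm h⟩).symm _ _
          (e_reach h4v hle))).trans hv)



lemma pderiv_s (i : Fin 3) : pderiv i s = 1 := by
  fin_cases i <;> simp [s]

lemma pd_pow (i : Fin 3) (m : ℕ) : pderiv i (s ^ m) = m • s ^ (m - 1) := by
  cases m with
  | zero => simp
  | succ m => rw [pderiv_pow, pderiv_s, mul_one, nsmul_eq_mul]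

lemma iter_pd (i : Fin 3) (k n : ℕ) :
    (fun r => pderiv i r)^[k] (s ^ n) = n.descFactorial k • s ^ (n - k) := by
  induction k with
  | zero => simp
  | succ k ih =>
      rw [Function.iterate_succ_apply', ih, map_nsmul, pd_pow,
        Nat.descFactorial_succ, smul_smul, mul_comm, Nat.sub_sub]

lemma part2 : {u : Fin 3 → ℕ | 4 ≤ ∑ i, u i}.Infinite := by
  apply Set.infinite_of_injective_forall_mem (f := fun n : ℕ => ![n + 4, 0, 0])
  · intro a b h
    have := congrFun h 0
    simpa using this
  · intro n
    simp [Fin.sum_univ_three]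

lemma part3 (n : ℕ) (hn : n ≤ 3) :
    pderiv (0 : Fin 3) (s ^ n) = pderiv (1 : Fin 3) (s ^ n) ∧
    pderiv (1 : Fin 3) ((fun r => pderiv (2 : Fin 3) r)^[3] (s ^ n))
      = (fun r => pderiv (0 : Fin 3) r)^[5] (s ^ n) ∧
    pderiv (2 : Fin 3) (s ^ n) = pderiv (1 : Fin 3) (s ^ n) := by
  refine ⟨by rw [pd_pow, pd_pow], ?_, by rw [pd_pow, pd_pow]⟩
  have h1 : n - 3 = 0 := by omega
  have h2 : n.descFactorial 5 = 0 := Nat.descFactorial_eq_zero_iff_lt.mpr (by omega)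
  rw [iter_pd, iter_pd, h2, map_nsmul, pd_pow, h1]
  simp


lemma pderiv_aeval (v : Fin 3 → MvPolynomial (Fin 3) ℂ) (i : Fin 3)
    (p : MvPolynomial (Fin 3) ℂ) :
    pderiv i (aeval v p) = ∑ j, aeval v (pderiv j p) * pderiv i (v j) := by
  induction p using MvPolynomial.induction_on with
  | C a => simp
  | add p q hp hq =>
      simp only [map_add, hp, hq, add_mul, Finset.sum_add_distrib]
  | mul_X p j hp =>
      fin_cases j <;>
      · rw [map_mul, aeval_X, pderiv_mul, hp]
        simp [Fin.sum_univ_three, pderiv_mul]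
        ring

lemma coeff_pderiv (i : Fin 3) (m : Fin 3 →₀ ℕ) (p : MvPolynomial (Fin 3) ℂ) :
    coeff m (pderiv i p) = (m i + 1 : ℂ) * coeff (m + Finsupp.single i 1) p := by
  induction p using MvPolynomial.induction_on' with
  | add p q hp hq => simp [hp, hq, mul_add]
  | monomial s a =>
      rw [pderiv_monomial, coeff_monomial, coeff_monomial]
      by_cases h : s = m + Finsupp.single i 1
      · subst h
        have h1 : m + Finsupp.single i 1 - Finsupp.single i 1 = m := by
          ext j
          simp only [Finsupp.tsub_apply, Finsupp.add_apply, Finsupp.single_apply]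
          split_ifs <;> omega
        rw [if_pos h1, if_pos rfl]
        have h2 : ((m + Finsupp.single i 1 : Fin 3 →₀ ℕ)) i = m i + 1 := by simp
        rw [h2]
        push_cast
        ring
      · rw [if_neg h, mul_zero]
        split_ifs with h'
        · have hsi : s i = 0 := by
            by_contra hne
            apply h
            ext j
            have hj := DFunLike.congr_fun h' j
            rw [Finsupp.tsub_apply] at hj
            rw [Finsupp.add_apply, Finsupp.single_apply]
            by_cases hji : i = j
            · subst hji
              rw [Finsupp.single_apply, if_pos rfl] at hj
              rw [if_pos rfl]
              omega
            · rw [Finsupp.single_apply, if_neg hji] at hj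
              rw [if_neg hji]
              omega
          simp [hsi]
        · rfl

lemma pderiv_comm (i j : Fin 3) (p : MvPolynomial (Fin 3) ℂ) :
    pderiv i (pderiv j p) = pderiv j (pderiv i p) := by
  apply MvPolynomial.ext
  intro m
  rw [coeff_pderiv, coeff_pderiv, coeff_pderiv, coeff_pderiv, add_right_comm]
  by_cases h : i = j
  · subst h; ring
  · rw [Finsupp.add_apply, Finsupp.add_apply, Finsupp.single_apply, Finsupp.single_apply]
    simp [h, Ne.symm h]
    ring

lemma coeff_iter_pderiv (k : ℕ) (m : Fin 3 →₀ ℕ) (p : MvPolynomial (Fin 3) ℂ) :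
    ∃ c : ℂ, c ≠ 0 ∧ coeff m ((fun r => pderiv (0 : Fin 3) r)^[k] p)
      = c * coeff (m + Finsupp.single 0 k) p := by
  induction k generalizing p with
  | zero => exact ⟨1, one_ne_zero, by simp⟩
  | succ k ih =>
      obtain ⟨c, hc, hck⟩ := ih (pderiv 0 p)
      have hm0 : ((m + Finsupp.single (0 : Fin 3) k) 0 : ℕ) = m 0 + k := by simp
      refine ⟨c * (((m 0 + k : ℕ) : ℂ) + 1),
        mul_ne_zero hc (Nat.cast_add_one_ne_zero _), ?_⟩
      rw [Function.iterate_succ_apply, hck, coeff_pderiv, hm0]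
      have hsingle : m + Finsupp.single (0 : Fin 3) (k + 1)
          = (m + Finsupp.single 0 k) + Finsupp.single 0 1 := by
        rw [add_assoc, ← Finsupp.single_add]
      rw [hsingle]
      ring


noncomputable def T : MvPolynomial (Fin 3) ℂ →ₐ[ℂ] MvPolynomial (Fin 3) ℂ :=
  aeval ![X 0 - X 1 - X 2, X 1, X 2]

noncomputable def Tinv : MvPolynomial (Fin 3) ℂ →ₐ[ℂ] MvPolynomial (Fin 3) ℂ :=
  aeval ![X 0 + X 1 + X 2, X 1, X 2]

lemma Tinv_T (p : MvPolynomial (Fin 3) ℂ) : Tinv (T p) = p := by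
  have h : Tinv.comp T = AlgHom.id ℂ (MvPolynomial (Fin 3) ℂ) := by
    apply MvPolynomial.algHom_ext
    intro i
    fin_cases i <;> simp [T, Tinv] <;> ring
  have := DFunLike.congr_fun h p
  simpa using this

lemma pderiv0_T (p : MvPolynomial (Fin 3) ℂ) :
    pderiv 0 (T p) = T (pderiv 0 p) := by
  show pderiv 0 (aeval _ p) = _
  rw [pderiv_aeval]
  simp [Fin.sum_univ_three, T]

lemma pderiv1_T (p : MvPolynomial (Fin 3) ℂ) :
    pderiv 1 (T p) = T (pderiv 1 p) - T (pderiv 0 p) := by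
  show pderiv 1 (aeval _ p) = _
  rw [pderiv_aeval]
  simp [Fin.sum_univ_three, T]
  ring

lemma pderiv2_T (p : MvPolynomial (Fin 3) ℂ) :
    pderiv 2 (T p) = T (pderiv 2 p) - T (pderiv 0 p) := by
  show pderiv 2 (aeval _ p) = _
  rw [pderiv_aeval]
  simp [Fin.sum_univ_three, T]
  ring

lemma iter0_T (k : ℕ) (p : MvPolynomial (Fin 3) ℂ) :
    (fun r => pderiv (0 : Fin 3) r)^[k] (T p)
      = T ((fun r => pderiv (0 : Fin 3) r)^[k] p) := by
  induction k generalizing p with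
  | zero => rfl
  | succ k ih =>
      rw [Function.iterate_succ_apply, Function.iterate_succ_apply, pderiv0_T, ih]

lemma coeff_zero_of_pd_zero {q : MvPolynomial (Fin 3) ℂ} {i : Fin 3}
    (h : pderiv i q = 0) {m : Fin 3 →₀ ℕ} (hm : m i ≠ 0) : coeff m q = 0 := by
  have key := coeff_pderiv i (m - Finsupp.single i 1) q
  rw [h, coeff_zero] at key
  have hm' : m - Finsupp.single i 1 + Finsupp.single i 1 = m := by
    ext j
    simp only [Finsupp.tsub_apply, Finsupp.add_apply, Finsupp.single_apply]
    split_ifs with hj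
    · subst hj; omega
    · omega
  rw [hm'] at key
  rcases mul_eq_zero.mp key.symm with h' | h'
  · exact absurd h' (Nat.cast_add_one_ne_zero _)
  · exact h'

lemma coeff_zero_of_iter4 {q : MvPolynomial (Fin 3) ℂ}
    (h : (fun r => pderiv (0 : Fin 3) r)^[4] q = 0) {m : Fin 3 →₀ ℕ}
    (hm : 4 ≤ m 0) : coeff m q = 0 := by
  obtain ⟨c, hc, hck⟩ := coeff_iter_pderiv 4 (m - Finsupp.single 0 4) q
  rw [h, coeff_zero] at hck
  have hm' : m - Finsupp.single 0 4 + Finsupp.single 0 4 = m := by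
    ext j
    simp only [Finsupp.tsub_apply, Finsupp.add_apply, Finsupp.single_apply]
    split_ifs with hj
    · subst hj; omega
    · omega
  rw [hm'] at hck
  rcases mul_eq_zero.mp hck.symm with h' | h'
  · exact absurd h' hc
  · exact h'

lemma rep {q : MvPolynomial (Fin 3) ℂ} (h1 : pderiv 1 q = 0) (h2 : pderiv 2 q = 0)
    (h4 : (fun r => pderiv (0 : Fin 3) r)^[4] q = 0) :
    q = ∑ n : Fin 4, C (coeff (Finsupp.single 0 (n : ℕ)) q) * X 0 ^ (n : ℕ) := by
  apply MvPolynomial.ext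
  intro m
  rw [MvPolynomial.coeff_sum]
  simp only [coeff_C_mul, coeff_X_pow]
  by_cases hc : m 1 = 0 ∧ m 2 = 0 ∧ m 0 < 4
  · obtain ⟨hc1, hc2, hc0⟩ := hc
    have hm : m = Finsupp.single 0 (m 0) := by
      ext j
      fin_cases j
      · simp
      · simp [Finsupp.single_apply]; omega
      · simp [Finsupp.single_apply]; omega
    rw [hm]
    have hinj : ∀ n : Fin 4, (Finsupp.single (0 : Fin 3) (n : ℕ)
        = Finsupp.single (0 : Fin 3) (m 0)) ↔ (n : ℕ) = m 0 := by
      intro n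
      constructor
      · intro h
        have := DFunLike.congr_fun h 0
        simpa using this
      · intro h; rw [h]
    obtain ⟨k, hk⟩ : ∃ k, m 0 = k := ⟨m 0, rfl⟩
    rw [hk] at hc0 ⊢
    interval_cases k <;>
      simp [Fin.sum_univ_four, Finsupp.single_eq_single_iff,
        show ((0 : Fin 4) : ℕ) = 0 from rfl, show ((1 : Fin 4) : ℕ) = 1 from rfl,
        show ((2 : Fin 4) : ℕ) = 2 from rfl, show ((3 : Fin 4) : ℕ) = 3 from rfl]
  · have hq : coeff m q = 0 := by
      have h' : m 1 ≠ 0 ∨ m 2 ≠ 0 ∨ 4 ≤ m 0 := by omega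
      rcases h' with h' | h' | h'
      · exact coeff_zero_of_pd_zero h1 h'
      · exact coeff_zero_of_pd_zero h2 h'
      · exact coeff_zero_of_iter4 h4 h'
    have hne : ∀ n : Fin 4, Finsupp.single (0 : Fin 3) (n : ℕ) ≠ m := by
      intro n h
      have e1 := DFunLike.congr_fun h 1
      have e2 := DFunLike.congr_fun h 2
      have e0 := DFunLike.congr_fun h 0
      simp [Finsupp.single_apply] at e0 e1 e2
      have := n.isLt
      omega
    rw [hq]
    symm
    apply Finset.sum_eq_zero
    intro n _
    rw [if_neg (hne n), mul_zero]

lemma part4 (p : MvPolynomial (Fin 3) ℂ)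
    (hc1 : pderiv (0 : Fin 3) p = pderiv (1 : Fin 3) p)
    (hc2 : pderiv (1 : Fin 3) ((fun r => pderiv (2 : Fin 3) r)^[3] p)
      = (fun r => pderiv (0 : Fin 3) r)^[5] p)
    (hc3 : pderiv (2 : Fin 3) p = pderiv (1 : Fin 3) p) :
    ∃! a : Fin 4 → ℂ, p = ∑ n : Fin 4, a n • s ^ (n : ℕ) := by
  have e1 : pderiv (1 : Fin 3) p = pderiv 0 p := hc1.symm
  have e2 : pderiv (2 : Fin 3) p = pderiv 0 p := hc3.trans hc1.symm
  have s2 : pderiv (2 : Fin 3) (pderiv 2 p) = pderiv 0 (pderiv 0 p) := by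
    rw [e2, pderiv_comm 2 0 p, e2]
  have s3 : pderiv (2 : Fin 3) (pderiv 2 (pderiv 2 p))
      = pderiv 0 (pderiv 0 (pderiv 0 p)) := by
    rw [s2, pderiv_comm 2 0 (pderiv 0 p), pderiv_comm 2 0 p, e2]
  have s4 : pderiv (1 : Fin 3) (pderiv 2 (pderiv 2 (pderiv 2 p)))
      = pderiv 0 (pderiv 0 (pderiv 0 (pderiv 0 p))) := by
    rw [s3, pderiv_comm 1 0 (pderiv 0 (pderiv 0 p)), pderiv_comm 1 0 (pderiv 0 p),
      pderiv_comm 1 0 p, e1]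
  have hc2' : pderiv (1 : Fin 3) (pderiv 2 (pderiv 2 (pderiv 2 p)))
      = (fun r => pderiv (0 : Fin 3) r)^[5] p := hc2
  have h45 : (fun r => pderiv (0 : Fin 3) r)^[4] p
      = (fun r => pderiv (0 : Fin 3) r)^[5] p := s4.symm.trans hc2'
  have hr : pderiv (0 : Fin 3) ((fun r => pderiv (0 : Fin 3) r)^[4] p)
      = (fun r => pderiv (0 : Fin 3) r)^[4] p := by
    exact ((Function.iterate_succ_apply' (fun r => pderiv (0 : Fin 3) r) 4 p).symm).trans
      h45.symm
  -- the 4th derivative vanishes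
  have hr0 : (fun r => pderiv (0 : Fin 3) r)^[4] p = 0 := by
    set r : MvPolynomial (Fin 3) ℂ := (fun r => pderiv (0 : Fin 3) r)^[4] p with hrdef
    have hiter : ∀ k, (fun x => pderiv (0 : Fin 3) x)^[k] r = r := by
      intro k
      induction k with
      | zero => rfl
      | succ k ih => rw [Function.iterate_succ_apply', ih]; exact hr
    apply MvPolynomial.ext
    intro m
    obtain ⟨c, hc, hck⟩ := coeff_iter_pderiv (r.totalDegree + 1) m r
    rw [hiter] at hck
    have hz : coeff (m + Finsupp.single 0 (r.totalDegree + 1)) r = 0 := by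
      apply coeff_eq_zero_of_totalDegree_lt
      set d : Fin 3 →₀ ℕ := m + Finsupp.single 0 (r.totalDegree + 1) with hd
      have h0 : r.totalDegree + 1 ≤ d 0 := by simp [hd]
      have hle : d 0 ≤ ∑ i ∈ d.support, d i := by
        by_cases h00 : d 0 = 0
        · rw [h00]; exact Nat.zero_le _
        · exact Finset.single_le_sum (fun i _ => Nat.zero_le _)
            (Finsupp.mem_support_iff.mpr h00)
      omega
    rw [hz, mul_zero] at hck
    rw [hck, coeff_zero]
  have hq1 : pderiv (1 : Fin 3) (T p) = 0 := by rw [pderiv1_T, e1, sub_self]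
  have hq2 : pderiv (2 : Fin 3) (T p) = 0 := by rw [pderiv2_T, e2, sub_self]
  have hq4 : (fun r => pderiv (0 : Fin 3) r)^[4] (T p) = 0 := by
    rw [iter0_T, hr0, map_zero]
  have hrep := rep hq1 hq2 hq4
  have hTC : ∀ (a : ℂ) (n : ℕ), Tinv (C a * X 0 ^ n) = a • s ^ n := by
    intro a n
    rw [map_mul, map_pow]
    simp [Tinv, s, smul_eq_C_mul]
  have hps : p = ∑ n : Fin 4,
      (coeff (Finsupp.single 0 (n : ℕ)) (T p)) • s ^ (n : ℕ) := by
    calc p = Tinv (T p) := (Tinv_T p).symm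
    _ = Tinv (∑ n : Fin 4, C (coeff (Finsupp.single 0 (n : ℕ)) (T p)) * X 0 ^ (n : ℕ)) := by
        rw [← hrep]
    _ = ∑ n : Fin 4, (coeff (Finsupp.single 0 (n : ℕ)) (T p)) • s ^ (n : ℕ) := by
        rw [map_sum]
        exact Finset.sum_congr rfl fun n _ => hTC _ _
  have hcoeff : ∀ k n : ℕ, n ≤ 3 →
      coeff (Finsupp.single (0 : Fin 3) k) (s ^ n) = if n = k then 1 else 0 := by
    intro k n _
    by_cases h : n = k
    · subst h
      rw [if_pos rfl]
      clear * -
      induction n with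
      | zero => simp
      | succ n ih =>
          have : s ^ (n + 1) = s ^ n * X 0 + (s ^ n * X 1 + s ^ n * X 2) := by
            rw [pow_succ, s]; ring
          rw [this, coeff_add, coeff_add]
          have e0 : coeff (Finsupp.single (0 : Fin 3) (n + 1)) (s ^ n * X 0)
              = coeff (Finsupp.single (0 : Fin 3) n) (s ^ n) := by
            rw [show Finsupp.single (0 : Fin 3) (n + 1)
                = Finsupp.single 0 n + Finsupp.single 0 1 by rw [← Finsupp.single_add],
              coeff_mul_X]
          have e1 : coeff (Finsupp.single (0 : Fin 3) (n + 1)) (s ^ n * X 1) = 0 := by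
            rw [coeff_mul_X', if_neg]
            simp [Finsupp.single_apply]
          have e2 : coeff (Finsupp.single (0 : Fin 3) (n + 1)) (s ^ n * X 2) = 0 := by
            rw [coeff_mul_X', if_neg]
            simp [Finsupp.single_apply]
          rw [e0, e1, e2, ih]
          ring
    · rw [if_neg h]
      have hhom : (s ^ n).IsHomogeneous n := by
        clear * -
        induction n with
        | zero => simpa using MvPolynomial.isHomogeneous_one (Fin 3) ℂ
        | succ n ih =>
            have hs : (s : MvPolynomial (Fin 3) ℂ).IsHomogeneous 1 := by
              apply MvPolynomial.IsHomogeneous.add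
              apply MvPolynomial.IsHomogeneous.add
              all_goals exact MvPolynomial.isHomogeneous_X _ _
            rw [pow_succ]
            exact ih.mul hs
      apply hhom.coeff_eq_zero
      by_cases hk : k = 0
      · subst hk; simpa [Finsupp.degree] using Ne.symm h
      · rw [Finsupp.degree_single]
        exact Ne.symm h
  have huniq : ∀ a b : Fin 4 → ℂ,
      (∑ n : Fin 4, a n • s ^ (n : ℕ)) = (∑ n : Fin 4, b n • s ^ (n : ℕ)) → a = b := by
    intro a b h
    funext j
    have e := congrArg (coeff (Finsupp.single (0 : Fin 3) (j : ℕ))) h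
    rw [MvPolynomial.coeff_sum, MvPolynomial.coeff_sum] at e
    simp only [coeff_smul] at e
    have hc4 : ∀ n : Fin 4, coeff (Finsupp.single (0 : Fin 3) (j : ℕ)) (s ^ (n : ℕ))
        = if n = j then 1 else 0 := by
      intro n
      rw [hcoeff _ _ (by omega)]
      simp [Fin.val_eq_val]
    simp only [hc4, smul_eq_mul, mul_ite, mul_one, mul_zero] at e
    rwa [Finset.sum_ite_eq' Finset.univ j a, Finset.sum_ite_eq' Finset.univ j b,
      if_pos (Finset.mem_univ j), if_pos (Finset.mem_univ j)] at e
  refine ⟨fun n => coeff (Finsupp.single 0 (n : ℕ)) (T p), hps, ?_⟩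
  intro b hb
  exact huniq b _ (hb.symm.trans hps)

end Stmt11

/-- For `M` with columns `(1,−1,0)`, `(−5,1,3)`, `(0,−1,1)`, the
bounded `M`-subgraphs of `ℕ³` are exactly the slices `{u : Σu = n}` for
`n = 0,1,2,3`, while `{u : Σu ≥ 4}` is a single unbounded `M`-subgraph; hence
`1, x+y+z, (x+y+z)², (x+y+z)³` form a basis of the polynomial solutions of
`I(M) = ⟨∂₁ − ∂₂, ∂₂∂₃³ − ∂₁⁵, ∂₃ − ∂₂⟩`. -/
theorem explicit_M_subgraphs_and_solutions :
    let w₁ : Fin 3 → ℤ := ![1, -1, 0]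
    let w₂ : Fin 3 → ℤ := ![-5, 1, 3]
    let w₃ : Fin 3 → ℤ := ![0, -1, 1]
    let adj : (Fin 3 → ℕ) → (Fin 3 → ℕ) → Prop := fun u v =>
      ∃ w ∈ ({w₁, w₂, w₃} : Set (Fin 3 → ℤ)),
        (∀ i, (v i : ℤ) = (u i : ℤ) + w i) ∨ (∀ i, (u i : ℤ) = (v i : ℤ) + w i)
    let s : MvPolynomial (Fin 3) ℂ := X 0 + X 1 + X 2
    let IsSolP : MvPolynomial (Fin 3) ℂ → Prop := fun p =>
      pderiv (0 : Fin 3) p = pderiv (1 : Fin 3) p ∧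
      pderiv (1 : Fin 3) ((fun r => pderiv (2 : Fin 3) r)^[3] p)
        = (fun r => pderiv (0 : Fin 3) r)^[5] p ∧
      pderiv (2 : Fin 3) p = pderiv (1 : Fin 3) p
    (∀ u v : Fin 3 → ℕ,
        Relation.ReflTransGen adj u v ↔
          ((∑ i, u i = ∑ i, v i ∧ ∑ i, u i ≤ 3) ∨ (4 ≤ ∑ i, u i ∧ 4 ≤ ∑ i, v i))) ∧
    {u : Fin 3 → ℕ | 4 ≤ ∑ i, u i}.Infinite ∧
    (∀ n : ℕ, n ≤ 3 → IsSolP (s ^ n)) ∧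
    (∀ p : MvPolynomial (Fin 3) ℂ, IsSolP p →
        ∃! a : Fin 4 → ℂ, p = ∑ n : Fin 4, a n • s ^ (n : ℕ)) := by
  intro w₁ w₂ w₃ adj s IsSolP
  refine ⟨fun u v => Stmt11.part1 u v, Stmt11.part2, fun n hn => Stmt11.part3 n hn,
    fun p hp => Stmt11.part4 p hp.1 hp.2.1 hp.2.2⟩
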